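/- For $\lambda, \nu \in \mathbb{C}$, the element $\lambda + \nu(s_{12} + s_{13} + \cdots + s_{1r})$ is invertible in the group algebra $\mathbb{C}[S_r]$ for all $r \in \{1, \ldots, n\}$ if and only if $\lambda + p\nu \neq 0$ and $\lambda - p\nu \neq 0$ for every integer $p$ with $0 \le p \le n-1$. -/

import Mathlib

open MonoidAlgebra Equiv Finset

variable {α : Type*} [DecidableEq α] [Fintype α]

/-- The sum of transpositions `swap a b` for `b ∈ S`, `b ≠ a`. -/
noncomputable def XX (S : Finset α) (a : α) : MonoidAlgebra ℂ (Equiv.Perm α) :=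
  ∑ b ∈ S.erase a, MonoidAlgebra.of ℂ (Equiv.Perm α) (Equiv.swap a b)

lemma of_swap_sq (a b : α) :
    MonoidAlgebra.of ℂ (Equiv.Perm α) (Equiv.swap a b) *
      MonoidAlgebra.of ℂ (Equiv.Perm α) (Equiv.swap a b) = 1 := by
  rw [← map_mul, Equiv.swap_mul_self, map_one]

lemma of_mul_swap (σ : Equiv.Perm α) (b d : α) :
    MonoidAlgebra.of ℂ (Equiv.Perm α) σ * MonoidAlgebra.of ℂ (Equiv.Perm α) (Equiv.swap b d) =
      MonoidAlgebra.of ℂ (Equiv.Perm α) (Equiv.swap (σ b) (σ d)) *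
        MonoidAlgebra.of ℂ (Equiv.Perm α) σ := by
  rw [← map_mul, ← map_mul, Equiv.swap_apply_apply, inv_mul_cancel_right]

lemma swap_mem_erase {S : Finset α} {a c b : α} (haS : a ∈ S) (hcS : c ∈ S)
    (hab : a ≠ b) (hcb : c ≠ b) {d : α} (hd : d ∈ S.erase b) :
    Equiv.swap a c d ∈ S.erase b := by
  rcases Finset.mem_erase.1 hd with ⟨hdb, hdS⟩
  rw [Equiv.swap_apply_def]
  split_ifs with h1 h2
  · exact Finset.mem_erase.2 ⟨hcb, hcS⟩
  · exact Finset.mem_erase.2 ⟨hab, haS⟩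
  · exact hd

/-- `of (swap a c)` commutes with `XX S b` when `a c ∈ S` both differ from `b`. -/
lemma comm_swap_XX {S : Finset α} {a c b : α} (haS : a ∈ S) (hcS : c ∈ S)
    (hab : a ≠ b) (hcb : c ≠ b) :
    MonoidAlgebra.of ℂ (Equiv.Perm α) (Equiv.swap a c) * XX S b =
      XX S b * MonoidAlgebra.of ℂ (Equiv.Perm α) (Equiv.swap a c) := by
  unfold XX
  rw [Finset.mul_sum, Finset.sum_mul]
  have key : ∀ d ∈ S.erase b,
      MonoidAlgebra.of ℂ (Equiv.Perm α) (Equiv.swap a c) *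
        MonoidAlgebra.of ℂ (Equiv.Perm α) (Equiv.swap b d) =
      MonoidAlgebra.of ℂ (Equiv.Perm α) (Equiv.swap b (Equiv.swap a c d)) *
        MonoidAlgebra.of ℂ (Equiv.Perm α) (Equiv.swap a c) := by
    intro d hd
    have hb : Equiv.swap a c b = b :=
      Equiv.swap_apply_of_ne_of_ne (Ne.symm hab) (Ne.symm hcb)
    rw [of_mul_swap, hb]
  rw [Finset.sum_congr rfl key]
  refine Finset.sum_nbij' (fun d => Equiv.swap a c d) (fun d => Equiv.swap a c d) ?_ ?_ ?_ ?_ ?_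
  · intro d hd; exact swap_mem_erase haS hcS hab hcb hd
  · intro d hd; exact swap_mem_erase haS hcS hab hcb hd
  · intro d _; simp
  · intro d _; simp
  · intro d _; simp

/-- Key relation: `X_{S,b} = s · X_{S∖b,a} · s + s` with `s = swap a b`. -/
lemma XX_keyrel {S : Finset α} {a b : α} (haS : a ∈ S) (hbS : b ∈ S) (hab : a ≠ b) :
    XX S b = MonoidAlgebra.of ℂ (Equiv.Perm α) (Equiv.swap a b) * XX (S.erase b) a *
        MonoidAlgebra.of ℂ (Equiv.Perm α) (Equiv.swap a b) +
      MonoidAlgebra.of ℂ (Equiv.Perm α) (Equiv.swap a b) := by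
  unfold XX
  rw [Finset.mul_sum, Finset.sum_mul]
  have key : ∀ c ∈ (S.erase b).erase a,
      MonoidAlgebra.of ℂ (Equiv.Perm α) (Equiv.swap a b) *
          MonoidAlgebra.of ℂ (Equiv.Perm α) (Equiv.swap a c) *
        MonoidAlgebra.of ℂ (Equiv.Perm α) (Equiv.swap a b) =
      MonoidAlgebra.of ℂ (Equiv.Perm α) (Equiv.swap b c) := by
    intro c hc
    rcases Finset.mem_erase.1 hc with ⟨hca, hc'⟩
    rcases Finset.mem_erase.1 hc' with ⟨hcb, _⟩
    rw [of_mul_swap, Equiv.swap_apply_left,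
      Equiv.swap_apply_of_ne_of_ne hca hcb, mul_assoc, of_swap_sq, mul_one]
  calc ∑ d ∈ S.erase b, MonoidAlgebra.of ℂ (Equiv.Perm α) (Equiv.swap b d)
      = MonoidAlgebra.of ℂ (Equiv.Perm α) (Equiv.swap b a) +
        ∑ c ∈ (S.erase b).erase a, MonoidAlgebra.of ℂ (Equiv.Perm α) (Equiv.swap b c) := by
        exact (Finset.add_sum_erase _ _ (Finset.mem_erase.2 ⟨hab, haS⟩)).symm
    _ = _ := by
        rw [Finset.sum_congr rfl key, Equiv.swap_comm b a, add_comm]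

lemma XX_comm {S : Finset α} {a b : α} (haS : a ∈ S) (hbS : b ∈ S) (hab : a ≠ b) :
    XX S b * XX (S.erase b) a = XX (S.erase b) a * XX S b := by
  conv_lhs => rw [show XX (S.erase b) a = ∑ c ∈ (S.erase b).erase a,
    MonoidAlgebra.of ℂ (Equiv.Perm α) (Equiv.swap a c) from rfl]
  rw [Finset.mul_sum, show XX (S.erase b) a = ∑ c ∈ (S.erase b).erase a,
    MonoidAlgebra.of ℂ (Equiv.Perm α) (Equiv.swap a c) from rfl, Finset.sum_mul]
  refine Finset.sum_congr rfl fun c hc => ?_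
  rcases Finset.mem_erase.1 hc with ⟨hca, hc'⟩
  rcases Finset.mem_erase.1 hc' with ⟨hcb, hcS⟩
  exact (comm_swap_XX haS hcS hab hcb).symm

lemma XX_mul_s {S : Finset α} {a b : α} (haS : a ∈ S) (hbS : b ∈ S) (hab : a ≠ b) :
    XX S b * MonoidAlgebra.of ℂ (Equiv.Perm α) (Equiv.swap a b) =
      MonoidAlgebra.of ℂ (Equiv.Perm α) (Equiv.swap a b) * XX (S.erase b) a + 1 := by
  rw [XX_keyrel haS hbS hab, add_mul, mul_assoc, mul_assoc, of_swap_sq, mul_one]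

lemma Y_mul_s {S : Finset α} {a b : α} (haS : a ∈ S) (hbS : b ∈ S) (hab : a ≠ b) :
    XX (S.erase b) a * MonoidAlgebra.of ℂ (Equiv.Perm α) (Equiv.swap a b) =
      MonoidAlgebra.of ℂ (Equiv.Perm α) (Equiv.swap a b) * XX S b - 1 := by
  have h := XX_keyrel haS hbS hab
  have : MonoidAlgebra.of ℂ (Equiv.Perm α) (Equiv.swap a b) * XX S b =
      XX (S.erase b) a * MonoidAlgebra.of ℂ (Equiv.Perm α) (Equiv.swap a b) + 1 := by
    rw [h, mul_add, ← mul_assoc, ← mul_assoc, of_swap_sq, one_mul]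
  rw [this, add_sub_cancel_right]

/-- The standard sesquilinear inner product on the group algebra. -/
noncomputable def BB (x y : MonoidAlgebra ℂ (Equiv.Perm α)) : ℂ :=
  ∑ g : Equiv.Perm α, (starRingEnd ℂ) (x.coeff g) * y.coeff g

lemma BB_of_mul (σ : Equiv.Perm α) (x y : MonoidAlgebra ℂ (Equiv.Perm α)) :
    BB (MonoidAlgebra.of ℂ (Equiv.Perm α) σ * x) y =
      BB x (MonoidAlgebra.of ℂ (Equiv.Perm α) σ⁻¹ * y) := by
  unfold BB
  refine Fintype.sum_equiv (Equiv.mulLeft σ⁻¹) _ _ (fun g => ?_)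
  simp [MonoidAlgebra.of_apply, MonoidAlgebra.coeff_single_mul_apply, Equiv.mulLeft]

lemma BB_XX_mul (S : Finset α) (a : α) (x y : MonoidAlgebra ℂ (Equiv.Perm α)) :
    BB (XX S a * x) y = BB x (XX S a * y) := by
  unfold XX
  rw [Finset.sum_mul, Finset.sum_mul]
  have h1 : ∀ (z : MonoidAlgebra ℂ (Equiv.Perm α)) (t : Finset α)
      (f : α → MonoidAlgebra ℂ (Equiv.Perm α)), BB (∑ c ∈ t, f c) z = ∑ c ∈ t, BB (f c) z := by
    intro z t f
    unfold BB
    rw [Finset.sum_comm]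
    refine Finset.sum_congr rfl fun g _ => ?_
    rw [← Finset.sum_mul, ← map_sum]
    congr 1
    · congr 1
      rw [MonoidAlgebra.coeff_sum]
      exact Finsupp.finset_sum_apply t (fun c => (f c).coeff) g
  have h2 : ∀ (z : MonoidAlgebra ℂ (Equiv.Perm α)) (t : Finset α)
      (f : α → MonoidAlgebra ℂ (Equiv.Perm α)), BB z (∑ c ∈ t, f c) = ∑ c ∈ t, BB z (f c) := by
    intro z t f
    unfold BB
    rw [Finset.sum_comm]
    refine Finset.sum_congr rfl fun g _ => ?_
    rw [← Finset.mul_sum]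
    congr 1
    rw [MonoidAlgebra.coeff_sum]
    exact Finsupp.finset_sum_apply t (fun c => (f c).coeff) g
  rw [h1, h2]
  refine Finset.sum_congr rfl fun c _ => ?_
  rw [BB_of_mul, Equiv.swap_inv]

lemma BB_self_eq_zero {x : MonoidAlgebra ℂ (Equiv.Perm α)} (h : BB x x = 0) : x = 0 := by
  unfold BB at h
  have h2 : ∑ g : Equiv.Perm α, (Complex.normSq (x.coeff g) : ℂ) = 0 := by
    rw [← h]
    exact Finset.sum_congr rfl fun g _ => Complex.normSq_eq_conj_mul_self.symm ▸ rfl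
  have h3 : ∑ g : Equiv.Perm α, Complex.normSq (x.coeff g) = 0 := by
    exact_mod_cast h2
  have h4 := (Finset.sum_eq_zero_iff_of_nonneg
    (fun g _ => Complex.normSq_nonneg (x.coeff g))).1 h3
  ext g
  simpa using Complex.normSq_eq_zero.1 (h4 g (Finset.mem_univ g))

noncomputable instance : Module.Finite ℂ (MonoidAlgebra ℂ (Equiv.Perm α)) :=
  Module.Finite.equiv ((MonoidAlgebra.coeffLinearEquiv ℂ).trans
    (Finsupp.linearEquivFunOnFinite ℂ ℂ (Equiv.Perm α))).symm

/-- Main spectral lemma: every eigenvalue of left multiplication by `XX S b`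
is an integer `p` with `|p| < |S|`. -/
lemma SL : ∀ (k : ℕ) (S : Finset α) (b : α), b ∈ S → S.card ≤ k →
    ∀ (μ : ℂ) (v : MonoidAlgebra ℂ (Equiv.Perm α)), v ≠ 0 →
    XX S b * v = μ • v → ∃ p : ℤ, p.natAbs < S.card ∧ μ = (p : ℂ) := by
  intro k
  induction k with
  | zero =>
    intro S b hb hcard
    exact absurd (Finset.card_pos.2 ⟨b, hb⟩) (by omega)
  | succ k IH =>
    intro S b hb hcard μ v hv hXv
    by_cases h1 : S.card ≤ 1
    · -- base case : `S = {b}`, `XX S b = 0`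
      have hS : S = {b} := by
        apply Finset.eq_singleton_iff_unique_mem.2
        exact ⟨hb, fun x hx => Finset.card_le_one.1 h1 x hx b hb⟩
      have hX0 : XX S b = 0 := by
        unfold XX
        rw [hS, Finset.erase_singleton, Finset.sum_empty]
      rw [hX0, zero_mul] at hXv
      rcases (smul_eq_zero.1 hXv.symm) with hμ | hv0
      · exact ⟨0, by simp [hS], by simp [hμ]⟩
      · exact absurd hv0 hv
    · push_neg at h1
      obtain ⟨a, haS, hab⟩ := Finset.exists_mem_ne h1 b
      have haE : a ∈ S.erase b := Finset.mem_erase.2 ⟨hab, haS⟩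
      have hcardE : (S.erase b).card = S.card - 1 := Finset.card_erase_of_mem hb
      have hcardE' : (S.erase b).card ≤ k := by omega
      set s : MonoidAlgebra ℂ (Equiv.Perm α) :=
        MonoidAlgebra.of ℂ (Equiv.Perm α) (Equiv.swap a b) with hs
      have hXs : XX S b * s = s * XX (S.erase b) a + 1 := XX_mul_s haS hb hab
      have hYs : XX (S.erase b) a * s = s * XX S b - 1 := Y_mul_s haS hb hab
      have hss : s * s = 1 := of_swap_sq a b
      have hcomm : XX S b * XX (S.erase b) a = XX (S.erase b) a * XX S b :=
        XX_comm haS hb hab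
      -- find a joint eigenvector
      set f : Module.End ℂ (MonoidAlgebra ℂ (Equiv.Perm α)) :=
        LinearMap.mulLeft ℂ (XX S b) with hf
      set g : Module.End ℂ (MonoidAlgebra ℂ (Equiv.Perm α)) :=
        LinearMap.mulLeft ℂ (XX (S.erase b) a) with hg
      have hvE : v ∈ Module.End.eigenspace f μ := by
        rw [Module.End.mem_eigenspace_iff, hf, LinearMap.mulLeft_apply]
        exact hXv
      have hmap : ∀ x ∈ Module.End.eigenspace f μ, g x ∈ Module.End.eigenspace f μ := by
        intro x hx
        rw [Module.End.mem_eigenspace_iff, hf, LinearMap.mulLeft_apply] at hx ⊢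
        rw [hg, LinearMap.mulLeft_apply, ← mul_assoc, hcomm, mul_assoc, hx, mul_smul_comm]
      haveI : Nontrivial (Module.End.eigenspace f μ) := by
        refine nontrivial_of_ne ⟨v, hvE⟩ 0 ?_
        simp [Submodule.mk_eq_zero, hv]
      obtain ⟨β, hβ⟩ := Module.End.exists_eigenvalue
        (LinearMap.restrict g hmap)
      obtain ⟨⟨u, huE⟩, huv⟩ := hβ.exists_hasEigenvector
      have hu0 : u ≠ 0 := by
        intro h0
        exact huv.right (by simp [h0])
      have hXu : XX S b * u = μ • u := by
        have := Module.End.mem_eigenspace_iff.1 huE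
        rw [hf, LinearMap.mulLeft_apply] at this
        exact this
      have hYu : XX (S.erase b) a * u = β • u := by
        have := huv.apply_eq_smul
        have h2 := congrArg Subtype.val this
        rw [LinearMap.restrict_apply] at h2
        simpa [hg, LinearMap.mulLeft_apply] using h2
      -- IH applied to β
      obtain ⟨q, hq, hβq⟩ := IH (S.erase b) a haE hcardE' β u hu0 hYu
      -- the vector w = s * u
      set w : MonoidAlgebra ℂ (Equiv.Perm α) := s * u with hw
      have hXw : XX S b * w = β • w + u := by
        rw [hw, ← mul_assoc, hXs, add_mul, one_mul, mul_assoc, hYu, mul_smul_comm]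
      have hYw : XX (S.erase b) a * w = μ • w - u := by
        rw [hw, ← mul_assoc, hYs, sub_mul, one_mul, mul_assoc, hXu, mul_smul_comm]
      by_cases hdep : ∃ c : ℂ, w = c • u
      · -- `w` is proportional to `u` : `μ = β ± 1`
        obtain ⟨c, hc⟩ := hdep
        have hsw : s * w = u := by rw [hw, ← mul_assoc, hss, one_mul]
        have hc2 : c * c = 1 := by
          have h2 : u = (c * c) • u := by
            conv_lhs => rw [← hsw, hc]
            rw [mul_smul_comm, ← hw, hc, smul_smul]
          have h3 : ((c * c) - 1) • u = 0 := by
            rw [sub_smul, one_smul, ← h2, sub_self]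
          rcases smul_eq_zero.1 h3 with h4 | h4
          · linear_combination h4
          · exact absurd h4 hu0
        have hkey : c * μ = c * β + 1 := by
          have e1 : XX S b * w = (c * μ) • u := by
            rw [hc, mul_smul_comm, hXu, smul_smul]
          have e2 : XX S b * w = (c * β + 1) • u := by
            rw [hXw, hc, smul_smul, add_smul, one_smul, mul_comm β c]
          have h3 : ((c * μ) - (c * β + 1)) • u = 0 := by
            rw [sub_smul, ← e1, ← e2, sub_self]
          rcases smul_eq_zero.1 h3 with h4 | h4
          · linear_combination h4
          · exact absurd h4 hu0
        rcases mul_self_eq_one_iff.1 hc2 with hc1 | hc1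
        · refine ⟨q + 1, ?_, ?_⟩
          · have := Int.natAbs_add_le q 1
            simp only [Int.natAbs_one] at this
            omega
          · subst hc1
            push_cast
            rw [← hβq]
            linear_combination hkey
        · refine ⟨q - 1, ?_, ?_⟩
          · have := Int.natAbs_sub_le q 1
            simp only [Int.natAbs_one] at this
            omega
          · subst hc1
            push_cast
            rw [← hβq]
            linear_combination -hkey
      · -- `w` independent from `u`
        by_cases hμβ : μ = β
        · -- contradiction via the inner product
          exfalso
          have hsym : BB (XX (S.erase b) a * u) w = BB u (XX (S.erase b) a * w) :=
            BB_XX_mul _ _ _ _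
          rw [hYu, hYw] at hsym
          have hβreal : (starRingEnd ℂ) β = β := by
            rw [hβq]; exact map_intCast (starRingEnd ℂ) q
          have hL : BB (β • u) w = β * BB u w := by
            unfold BB
            rw [Finset.mul_sum]
            refine Finset.sum_congr rfl fun gg _ => ?_
            rw [MonoidAlgebra.coeff_smul_apply, smul_eq_mul, map_mul, hβreal, mul_assoc]
          have hR : BB u (μ • w - u) = μ * BB u w - BB u u := by
            unfold BB
            rw [Finset.mul_sum, ← Finset.sum_sub_distrib]
            refine Finset.sum_congr rfl fun gg _ => ?_
            rw [MonoidAlgebra.coeff_sub, Finsupp.sub_apply, MonoidAlgebra.coeff_smul_apply, smul_eq_mul]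
            ring
          rw [hL, hR, hμβ] at hsym
          have : BB u u = 0 := by linear_combination hsym
          exact hu0 (BB_self_eq_zero this)
        · -- swap the eigenvalues : `μ` is an eigenvalue of `Y`
          set u' : MonoidAlgebra ℂ (Equiv.Perm α) := w - (μ - β)⁻¹ • u with hu'
          have hΔ : μ - β ≠ 0 := sub_ne_zero.2 hμβ
          have hu'0 : u' ≠ 0 := by
            intro h0
            apply hdep
            refine ⟨(μ - β)⁻¹, ?_⟩
            have := sub_eq_zero.1 (hu' ▸ h0)
            exact this
          have hYu' : XX (S.erase b) a * u' = μ • u' := by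
            rw [hu', mul_sub, hYw, mul_smul_comm, hYu]
            match_scalars <;> field_simp <;> ring
          obtain ⟨p, hp, hμp⟩ := IH (S.erase b) a haE hcardE' μ u' hu'0 hYu'
          exact ⟨p, by omega, hμp⟩

/-- `λ + ν(s₁₂ + ⋯ + s₁ᵣ)` is invertible in `ℂ[S_r]` for all `r ∈ {1,…,n}`
iff `λ ± pν ≠ 0` for all `0 ≤ p ≤ n-1`. -/
theorem stmt2 (n : ℕ) (hn : 1 ≤ n) (lam nu : ℂ) :
    (∀ r : ℕ, (hr : 1 ≤ r) → r ≤ n →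
      IsUnit (lam • (1 : MonoidAlgebra ℂ (Equiv.Perm (Fin r))) +
        nu • ∑ m ∈ Finset.univ.filter (fun m : Fin r => m ≠ ⟨0, hr⟩),
          MonoidAlgebra.of ℂ (Equiv.Perm (Fin r)) (Equiv.swap ⟨0, hr⟩ m)))
    ↔ (∀ p : ℕ, p < n → lam + (p : ℂ) * nu ≠ 0 ∧ lam - (p : ℂ) * nu ≠ 0) := by
  constructor
  · -- easy direction, via 1-dimensional representations
    intro H p hp
    have h1r : 1 ≤ p + 1 := Nat.succ_le_succ (Nat.zero_le p)
    have hu := H (p + 1) h1r (by omega)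
    set z : Fin (p + 1) := ⟨0, h1r⟩ with hz
    have hcardf : (Finset.univ.filter (fun m : Fin (p+1) => m ≠ z)).card = p := by
      rw [Finset.filter_ne', Finset.card_erase_of_mem (Finset.mem_univ z),
        Finset.card_univ, Fintype.card_fin]
      omega
    constructor
    · -- trivial representation
      set ε := (MonoidAlgebra.lift ℂ ℂ (Equiv.Perm (Fin (p+1)))) 1 with hε
      have hval : ε (lam • (1 : MonoidAlgebra ℂ (Equiv.Perm (Fin (p+1)))) +
          nu • ∑ m ∈ Finset.univ.filter (fun m : Fin (p+1) => m ≠ z),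
            MonoidAlgebra.of ℂ (Equiv.Perm (Fin (p+1))) (Equiv.swap z m)) =
          lam + (p : ℂ) * nu := by
        rw [map_add, map_smul, map_smul, map_one, map_sum]
        have : ∀ m ∈ Finset.univ.filter (fun m : Fin (p+1) => m ≠ z),
            ε (MonoidAlgebra.of ℂ (Equiv.Perm (Fin (p+1))) (Equiv.swap z m)) = 1 := by
          intro m _
          rw [hε, MonoidAlgebra.lift_of]
          rfl
        rw [Finset.sum_congr rfl this, Finset.sum_const, hcardf, nsmul_eq_mul, mul_one]
        simp [smul_eq_mul]
        ring
      have := (hu.map ε).ne_zero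
      rw [hval] at this
      exact this
    · -- sign representation
      set χ : Equiv.Perm (Fin (p+1)) →* ℂ :=
        MonoidHom.comp (Int.castRingHom ℂ).toMonoidHom
          ((Units.coeHom ℤ).comp Equiv.Perm.sign) with hχ
      set ψ := (MonoidAlgebra.lift ℂ ℂ (Equiv.Perm (Fin (p+1)))) χ with hψ
      have hval : ψ (lam • (1 : MonoidAlgebra ℂ (Equiv.Perm (Fin (p+1)))) +
          nu • ∑ m ∈ Finset.univ.filter (fun m : Fin (p+1) => m ≠ z),
            MonoidAlgebra.of ℂ (Equiv.Perm (Fin (p+1))) (Equiv.swap z m)) =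
          lam - (p : ℂ) * nu := by
        rw [map_add, map_smul, map_smul, map_one, map_sum]
        have : ∀ m ∈ Finset.univ.filter (fun m : Fin (p+1) => m ≠ z),
            ψ (MonoidAlgebra.of ℂ (Equiv.Perm (Fin (p+1))) (Equiv.swap z m)) = -1 := by
          intro m hm
          rw [hψ, MonoidAlgebra.lift_of, hχ]
          have hmz : z ≠ m := Ne.symm (Finset.mem_filter.1 hm).2
          simp [Equiv.Perm.sign_swap hmz]
        rw [Finset.sum_congr rfl this, Finset.sum_const, hcardf, nsmul_eq_mul]
        simp [smul_eq_mul]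
        ring
      have := (hu.map ψ).ne_zero
      rw [hval] at this
      exact this
  · -- hard direction
    intro H r hr hrn
    set z : Fin r := ⟨0, hr⟩ with hz
    set X : MonoidAlgebra ℂ (Equiv.Perm (Fin r)) := XX Finset.univ z with hXdef
    have hXeq : ∑ m ∈ Finset.univ.filter (fun m : Fin r => m ≠ z),
        MonoidAlgebra.of ℂ (Equiv.Perm (Fin r)) (Equiv.swap z m) = X := by
      rw [hXdef]
      unfold XX
      rw [Finset.filter_ne']
    rw [hXeq]
    set a : MonoidAlgebra ℂ (Equiv.Perm (Fin r)) := lam • 1 + nu • X with ha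
    have key : ∀ c, a * c = 0 → c = 0 := by
      intro c hc
      by_contra hc0
      have expand : lam • c + nu • (X * c) = 0 := by
        rw [← hc, ha, add_mul, smul_mul_assoc, smul_mul_assoc, one_mul]
      by_cases hnu : nu = 0
      · rw [hnu, zero_smul, add_zero] at expand
        rcases smul_eq_zero.1 expand with h0 | h0
        · have := (H 0 hn).1
          simp [h0] at this
        · exact hc0 h0
      · have hXc : X * c = (-(lam/nu)) • c := by
          have h2 : nu • (X * c) = (-lam) • c := by
            rw [neg_smul]
            exact eq_neg_of_add_eq_zero_right expand
          have h3 : nu • ((-(lam/nu)) • c) = (-lam) • c := by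
            rw [smul_smul]
            congr 1
            field_simp
          have := h2.trans h3.symm
          exact smul_right_injective _ hnu this
        obtain ⟨p, hpcard, hpeq⟩ := SL (Finset.univ : Finset (Fin r)).card
          Finset.univ z (Finset.mem_univ z) le_rfl _ c hc0 hXc
        rw [Finset.card_univ, Fintype.card_fin] at hpcard
        have hlam : lam + (p : ℂ) * nu = 0 := by
          have : -(lam/nu) = (p:ℂ) := hpeq
          field_simp at this
          linear_combination -this
        have hq : p.natAbs < n := lt_of_lt_of_le hpcard hrn
        obtain ⟨hplus, hminus⟩ := H p.natAbs hq
        rcases Int.natAbs_eq p with he | he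
        · apply hplus
          have h5 := congrArg (fun t : ℤ => (t : ℂ)) he
          simp only [Int.cast_natCast] at h5
          linear_combination hlam - nu * h5
        · apply hminus
          have h5 := congrArg (fun t : ℤ => (t : ℂ)) he
          simp only [Int.cast_neg, Int.cast_natCast] at h5
          linear_combination hlam - nu * h5
    have hinj : Function.Injective (LinearMap.mulLeft ℂ a) := by
      intro x y hxy
      have : a * (x - y) = 0 := by
        rw [mul_sub, sub_eq_zero]
        simpa [LinearMap.mulLeft_apply] using hxy
      have := key _ this
      rwa [sub_eq_zero] at this
    obtain ⟨cinv, hcinv⟩ := LinearMap.injective_iff_surjective.mp hinj 1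
    rw [LinearMap.mulLeft_apply] at hcinv
    have h2 : a * (cinv * a - 1) = 0 := by
      rw [mul_sub, ← mul_assoc, hcinv, one_mul, mul_one, sub_self]
    have h3 : cinv * a = 1 := by
      have := key _ h2
      rwa [sub_eq_zero] at this
    exact ⟨⟨a, cinv, hcinv, h3⟩, rfl⟩
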